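/- For all integers m, n ≥ 1, the identity W_{m+1}·W_{n+1} + q·W_m·W_n = W_2·W_{m+n} + q·W_1·W_{m+n−1} holds in the real quaternion algebra. -/
import Mathlib

open Quaternion

theorem stmt6 (p q : ℝ) (w : ℕ → ℝ) (hw : ∀ n, w (n + 2) = p * w (n + 1) + q * w n)
    (W : ℕ → ℍ[ℝ]) (hW : ∀ n, W n = ⟨w n, w (n + 1), w (n + 2), w (n + 3)⟩)
    (m n : ℕ) (hm : 1 ≤ m) (hn : 1 ≤ n) :
    W (m + 1) * W (n + 1) + q • (W m * W n) =
      W 2 * W (m + n) + q • (W 1 * W (m + n - 1)) := by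
  have hWrec : ∀ k, W (k + 2) = p • W (k + 1) + q • W k := by
    intro k
    rw [hW, hW, hW]
    ext <;> simp <;>
      [exact hw k; exact hw (k+1); exact hw (k+2); exact hw (k+3)]
  have key : ∀ M, (W (M + 2) * W (n + 1) + q • (W (M + 1) * W n) =
      W 2 * W (M + 1 + n) + q • (W 1 * W (M + n))) ∧
      (W (M + 3) * W (n + 1) + q • (W (M + 2) * W n) =
      W 2 * W (M + 2 + n) + q • (W 1 * W (M + 1 + n))) := by
    intro M
    induction M with
    | zero =>
      constructor
      · simp [Nat.add_comm]
      · have h1 : (3 : ℕ) = 1 + 2 := rfl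
        have h2 : 2 + n = n + 2 := by omega
        rw [h1, h2, hWrec 1, hWrec n]
        simp only [add_mul, mul_add, smul_mul_assoc, mul_smul_comm, smul_add, smul_smul,
          Nat.zero_add, Nat.add_comm 1 n]
        module
    | succ k ih =>
      refine ⟨ih.2, ?_⟩
      have h13 : W (k+3) = p • W (k+2) + q • W (k+1) := by
        have := hWrec (k+1)
        rwa [show k+1+2 = k+3 by omega, show k+1+1 = k+2 by omega] at this
      have h14 : W (k+4) = p • W (k+3) + q • W (k+2) := by
        have := hWrec (k+2)
        rwa [show k+2+2 = k+4 by omega, show k+2+1 = k+3 by omega] at this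
      have hkn : W (k+2+n) = p • W (k+1+n) + q • W (k+n) := by
        have := hWrec (k+n)
        rwa [show k+n+2 = k+2+n by omega, show k+n+1 = k+1+n by omega] at this
      have hkn3 : W (k+3+n) = p • W (k+2+n) + q • W (k+1+n) := by
        have := hWrec (k+1+n)
        rwa [show k+1+n+2 = k+3+n by omega, show k+1+n+1 = k+2+n by omega] at this
      have comb : p • (W (k+3) * W (n+1) + q • (W (k+2) * W n)) +
          q • (W (k+2) * W (n+1) + q • (W (k+1) * W n)) =
          p • (W 2 * W (k+2+n) + q • (W 1 * W (k+1+n))) +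
          q • (W 2 * W (k+1+n) + q • (W 1 * W (k+n))) := by
        rw [ih.1, ih.2]
      rw [show k+1+3 = k+4 by omega, show k+1+2+n = k+3+n by omega,
        show k+1+1+n = k+2+n by omega, show k+1+2 = k+3 by omega]
      refine Eq.trans ?_ (Eq.trans comb ?_)
      · rw [h14, h13]
        simp only [add_mul, smul_mul_assoc, smul_add, smul_smul, mul_smul_comm, mul_add]
        module
      · rw [hkn3, hkn]
        simp only [add_mul, smul_mul_assoc, smul_add, smul_smul, mul_smul_comm, mul_add]
        module
  obtain ⟨M, rfl⟩ := Nat.exists_eq_add_of_le hm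
  rw [show 1+M+1 = M+2 by omega, show 1+M+n-1 = M+n by omega,
    show 1+M+n = M+1+n by omega, show 1+M = M+1 by omega]
  exact (key M).1
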